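/- arXiv:2011.14391 — 2 statements merged into one kernel-verified Lean document; each statement's English description precedes it below -/
import Mathlib

section
/- Gradient domination core inequality: assume Q is positive semidefinite, R is positive definite, and Σ₁ is positive semidefinite. Then for any two stable gains θ and θ*, writing G := R + γ Bᵀ M(θ) B (which is positive definite), one has J(θ) − J(θ*) ≤ tr( Σ_{θ*} E_θᵀ G^{−1} E_θ ) ≤ ( ‖Σ_{θ*}‖ / σ_min(R) ) · tr( E_θᵀ E_θ ), where σ_min denotes the smallest singular value and ‖·‖ the operator norm. -/
open Matrix
open scoped Matrix.Norms.L2Operator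

noncomputable section

/-- The closed-loop matrix `C_θ = A - B θ`. -/
def Cl {dx du : ℕ} (A : Matrix (Fin dx) (Fin dx) ℝ) (B : Matrix (Fin dx) (Fin du) ℝ)
    (θ : Matrix (Fin du) (Fin dx) ℝ) : Matrix (Fin dx) (Fin dx) ℝ :=
  A - B * θ

/-- A closed-loop matrix `C` is stable (for discount factor `γ`) if
`‖C^t‖ ≤ c rᵗ γ^{-t/2}` (L2 operator norm) for some `c > 0` and `r ∈ (0,1)`. -/
def IsStable (γ : ℝ) {dx : ℕ} (C : Matrix (Fin dx) (Fin dx) ℝ) : Prop :=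
  ∃ c > (0:ℝ), ∃ r ∈ Set.Ioo (0:ℝ) 1, ∀ t : ℕ, ‖C ^ t‖ ≤ c * r ^ t * γ ^ (-(t : ℝ) / 2)

/-- `M(θ) := ∑_{t=0}^∞ γᵗ (C_θᵀ)ᵗ (Q + θᵀ R θ) C_θᵗ`. -/
def Mmat {dx du : ℕ} (γ : ℝ) (A : Matrix (Fin dx) (Fin dx) ℝ) (B : Matrix (Fin dx) (Fin du) ℝ)
    (Q : Matrix (Fin dx) (Fin dx) ℝ) (R : Matrix (Fin du) (Fin du) ℝ)
    (θ : Matrix (Fin du) (Fin dx) ℝ) : Matrix (Fin dx) (Fin dx) ℝ :=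
  ∑' t : ℕ, γ ^ t • ((Cl A B θ)ᵀ ^ t * (Q + θᵀ * R * θ) * Cl A B θ ^ t)

/-- `Σ_θ := (1-γ) ∑_{t=0}^∞ γᵗ C_θᵗ Σ₁ (C_θᵀ)ᵗ`. -/
def SigMat {dx du : ℕ} (γ : ℝ) (A : Matrix (Fin dx) (Fin dx) ℝ) (B : Matrix (Fin dx) (Fin du) ℝ)
    (S1 : Matrix (Fin dx) (Fin dx) ℝ) (θ : Matrix (Fin du) (Fin dx) ℝ) :
    Matrix (Fin dx) (Fin dx) ℝ :=
  (1 - γ) • ∑' t : ℕ, γ ^ t • (Cl A B θ ^ t * S1 * (Cl A B θ)ᵀ ^ t)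

/-- `E_θ := (R + γ Bᵀ M(θ) B) θ - γ Bᵀ M(θ) A`. -/
def Emat {dx du : ℕ} (γ : ℝ) (A : Matrix (Fin dx) (Fin dx) ℝ) (B : Matrix (Fin dx) (Fin du) ℝ)
    (Q : Matrix (Fin dx) (Fin dx) ℝ) (R : Matrix (Fin du) (Fin du) ℝ)
    (θ : Matrix (Fin du) (Fin dx) ℝ) : Matrix (Fin du) (Fin dx) ℝ :=
  (R + γ • (Bᵀ * Mmat γ A B Q R θ * B)) * θ - γ • (Bᵀ * Mmat γ A B Q R θ * A)

/-- `J(θ) := (1-γ) tr(M(θ) Σ₁)`. -/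
def Jcost {dx du : ℕ} (γ : ℝ) (A : Matrix (Fin dx) (Fin dx) ℝ) (B : Matrix (Fin dx) (Fin du) ℝ)
    (Q : Matrix (Fin dx) (Fin dx) ℝ) (R : Matrix (Fin du) (Fin du) ℝ)
    (S1 : Matrix (Fin dx) (Fin dx) ℝ) (θ : Matrix (Fin du) (Fin dx) ℝ) : ℝ :=
  (1 - γ) * (Mmat γ A B Q R θ * S1).trace

/-- The smallest singular value of a square matrix, as the infimum of `‖Ax‖` over unit vectors. -/
def sigmaMin {m : Type*} [Fintype m] [DecidableEq m] (A : Matrix m m ℝ) : ℝ :=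
  ⨅ x : {x : EuclideanSpace ℝ m // ‖x‖ = 1}, ‖Matrix.toEuclideanLin A x.1‖

/-- The Frobenius norm of a matrix. -/
def frobNorm {m n : Type*} [Fintype m] [Fintype n] (A : Matrix m n ℝ) : ℝ :=
  Real.sqrt (∑ i, ∑ j, A i j ^ 2)

namespace GradDomAux

/-! ### Auxiliary lemmas -/

lemma norm_transpose {m n : Type*} [Fintype m] [Fintype n] [DecidableEq m] [DecidableEq n]
    (A : Matrix m n ℝ) : ‖Aᵀ‖ = ‖A‖ := by
  rw [← Matrix.conjTranspose_eq_transpose_of_trivial, Matrix.l2_opNorm_conjTranspose]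

lemma geom_bound {dx : ℕ} {γ : ℝ} (hγ : γ ∈ Set.Ioo (0:ℝ) 1) {C : Matrix (Fin dx) (Fin dx) ℝ}
    (hC : IsStable γ C) :
    ∃ c > (0:ℝ), ∃ ρ ∈ Set.Ioo (0:ℝ) 1, ∀ t : ℕ, γ ^ t * ‖C ^ t‖ ^ 2 ≤ c * ρ ^ t := by
  obtain ⟨c, hc, r, hr, hb⟩ := hC
  refine ⟨c ^ 2, by positivity, r ^ 2, ⟨pow_pos hr.1 2, by nlinarith [hr.1, hr.2]⟩, fun t => ?_⟩
  have hγ0 : (0:ℝ) < γ := hγ.1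
  set a : ℝ := γ ^ (-(t:ℝ)/2) with ha
  have key : γ ^ t * a ^ 2 = 1 := by
    rw [ha, ← Real.rpow_natCast γ t, ← Real.rpow_natCast (γ ^ (-(t:ℝ)/2)) 2,
      ← Real.rpow_mul hγ0.le, ← Real.rpow_add hγ0]
    norm_num
  have h2 : ‖C ^ t‖ ^ 2 ≤ (c * r ^ t * a) ^ 2 := by
    have := hb t
    have h1 : (0:ℝ) ≤ ‖C ^ t‖ := norm_nonneg _
    nlinarith
  calc γ ^ t * ‖C ^ t‖ ^ 2 ≤ γ ^ t * (c * r ^ t * a) ^ 2 := by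
        exact mul_le_mul_of_nonneg_left h2 (pow_nonneg hγ0.le t)
    _ = c ^ 2 * (r ^ 2) ^ t * (γ ^ t * a ^ 2) := by ring
    _ = c ^ 2 * (r ^ 2) ^ t := by rw [key, mul_one]

lemma summable_of_geom {E : Type*} [NormedAddCommGroup E] [CompleteSpace E] {f : ℕ → E} {c ρ : ℝ}
    (hρ0 : 0 < ρ) (hρ1 : ρ < 1) (h : ∀ t, ‖f t‖ ≤ c * ρ ^ t) : Summable f :=
  Summable.of_norm (Summable.of_nonneg_of_le (fun t => norm_nonneg _) h
    ((summable_geometric_of_lt_one hρ0.le hρ1).mul_left c))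

lemma summableM {dx : ℕ} {γ : ℝ} (hγ : γ ∈ Set.Ioo (0:ℝ) 1) {C : Matrix (Fin dx) (Fin dx) ℝ}
    (hC : IsStable γ C) (X : Matrix (Fin dx) (Fin dx) ℝ) :
    Summable (fun t : ℕ => γ ^ t • (Cᵀ ^ t * X * C ^ t)) := by
  obtain ⟨c, hc, ρ, hρ, hb⟩ := geom_bound hγ hC
  refine summable_of_geom (c := c * ‖X‖) hρ.1 hρ.2 (fun t => ?_)
  have h1 : ‖γ ^ t • (Cᵀ ^ t * X * C ^ t)‖ ≤ γ ^ t * (‖C ^ t‖ * ‖X‖ * ‖C ^ t‖) := by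
    rw [norm_smul, Real.norm_eq_abs, abs_of_nonneg (pow_nonneg hγ.1.le t)]
    refine mul_le_mul_of_nonneg_left ?_ (pow_nonneg hγ.1.le t)
    calc ‖Cᵀ ^ t * X * C ^ t‖ ≤ ‖Cᵀ ^ t * X‖ * ‖C ^ t‖ := norm_mul_le _ _
      _ ≤ ‖Cᵀ ^ t‖ * ‖X‖ * ‖C ^ t‖ := by
          exact mul_le_mul_of_nonneg_right (norm_mul_le _ _) (norm_nonneg _)
      _ = ‖C ^ t‖ * ‖X‖ * ‖C ^ t‖ := by rw [← Matrix.transpose_pow, norm_transpose]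
  calc ‖γ ^ t • (Cᵀ ^ t * X * C ^ t)‖ ≤ γ ^ t * (‖C ^ t‖ * ‖X‖ * ‖C ^ t‖) := h1
    _ = (γ ^ t * ‖C ^ t‖ ^ 2) * ‖X‖ := by ring
    _ ≤ (c * ρ ^ t) * ‖X‖ := mul_le_mul_of_nonneg_right (hb t) (norm_nonneg _)
    _ = c * ‖X‖ * ρ ^ t := by ring

lemma summableS {dx : ℕ} {γ : ℝ} (hγ : γ ∈ Set.Ioo (0:ℝ) 1) {C : Matrix (Fin dx) (Fin dx) ℝ}
    (hC : IsStable γ C) (X : Matrix (Fin dx) (Fin dx) ℝ) :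
    Summable (fun t : ℕ => γ ^ t • (C ^ t * X * Cᵀ ^ t)) := by
  obtain ⟨c, hc, ρ, hρ, hb⟩ := geom_bound hγ hC
  refine summable_of_geom (c := c * ‖X‖) hρ.1 hρ.2 (fun t => ?_)
  have h1 : ‖γ ^ t • (C ^ t * X * Cᵀ ^ t)‖ ≤ γ ^ t * (‖C ^ t‖ * ‖X‖ * ‖C ^ t‖) := by
    rw [norm_smul, Real.norm_eq_abs, abs_of_nonneg (pow_nonneg hγ.1.le t)]
    refine mul_le_mul_of_nonneg_left ?_ (pow_nonneg hγ.1.le t)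
    calc ‖C ^ t * X * Cᵀ ^ t‖ ≤ ‖C ^ t * X‖ * ‖Cᵀ ^ t‖ := norm_mul_le _ _
      _ ≤ ‖C ^ t‖ * ‖X‖ * ‖Cᵀ ^ t‖ := by
          exact mul_le_mul_of_nonneg_right (norm_mul_le _ _) (norm_nonneg _)
      _ = ‖C ^ t‖ * ‖X‖ * ‖C ^ t‖ := by rw [← Matrix.transpose_pow, norm_transpose]
  calc ‖γ ^ t • (C ^ t * X * Cᵀ ^ t)‖ ≤ γ ^ t * (‖C ^ t‖ * ‖X‖ * ‖C ^ t‖) := h1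
    _ = (γ ^ t * ‖C ^ t‖ ^ 2) * ‖X‖ := by ring
    _ ≤ (c * ρ ^ t) * ‖X‖ := mul_le_mul_of_nonneg_right (hb t) (norm_nonneg _)
    _ = c * ‖X‖ * ρ ^ t := by ring

/-- sandwich linear map `Y ↦ P * Y * Q`. -/
def sandwichLM {l m n p : Type*} [Fintype m] [Fintype n]
    (P : Matrix l m ℝ) (Q : Matrix n p ℝ) : Matrix m n ℝ →ₗ[ℝ] Matrix l p ℝ where
  toFun Y := P * Y * Q
  map_add' Y Z := by simp [Matrix.mul_add, Matrix.add_mul]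
  map_smul' a Y := by simp [Matrix.mul_smul, Matrix.smul_mul]

def traceMulLM {m n : Type*} [Fintype m] [Fintype n] (P : Matrix m n ℝ) :
    Matrix n m ℝ →ₗ[ℝ] ℝ where
  toFun Y := (P * Y).trace
  map_add' Y Z := by simp [Matrix.mul_add]
  map_smul' a Y := by simp [Matrix.mul_smul]

def mulTraceLM {m n : Type*} [Fintype m] [Fintype n] (P : Matrix m n ℝ) :
    Matrix n m ℝ →ₗ[ℝ] ℝ where
  toFun Y := (Y * P).trace
  map_add' Y Z := by simp [Matrix.add_mul]
  map_smul' a Y := by simp [Matrix.smul_mul]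

def transposeLM {m n : Type*} [Fintype m] [Fintype n] : Matrix m n ℝ →ₗ[ℝ] Matrix n m ℝ where
  toFun Y := Yᵀ
  map_add' Y Z := by simp
  map_smul' a Y := by simp

def quadLM {m n : Type*} [Fintype m] [Fintype n] (x : m → ℝ) (y : n → ℝ) :
    Matrix m n ℝ →ₗ[ℝ] ℝ where
  toFun Y := x ⬝ᵥ (Y *ᵥ y)
  map_add' Y Z := by simp [Matrix.add_mulVec, dotProduct_add]
  map_smul' a Y := by simp [Matrix.smul_mulVec, dotProduct_smul]

lemma map_tsum' {V W : Type*} [NormedAddCommGroup V] [NormedSpace ℝ V] [FiniteDimensional ℝ V]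
    [NormedAddCommGroup W] [NormedSpace ℝ W] (φ : V →ₗ[ℝ] W) {f : ℕ → V} (hf : Summable f) :
    φ (∑' t, f t) = ∑' t, φ (f t) :=
  (LinearMap.toContinuousLinearMap φ).map_tsum hf

lemma posSemidef_tsum {n : Type*} [Fintype n] [DecidableEq n] {f : ℕ → Matrix n n ℝ}
    (hf : Summable f) (h : ∀ t, (f t).PosSemidef) : (∑' t, f t).PosSemidef := by
  refine Matrix.PosSemidef.of_dotProduct_mulVec_nonneg ?_ ?_
  · show _ = _
    rw [Matrix.conjTranspose_eq_transpose_of_trivial]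
    have := map_tsum' transposeLM hf
    simp only [transposeLM, LinearMap.coe_mk, AddHom.coe_mk] at this
    refine this.trans ?_
    exact tsum_congr fun t => by
      have := (h t).1
      rwa [Matrix.IsHermitian, Matrix.conjTranspose_eq_transpose_of_trivial] at this
  · intro x
    have := map_tsum' (quadLM (star x) x) hf
    simp only [quadLM, LinearMap.coe_mk, AddHom.coe_mk] at this
    rw [this]
    exact tsum_nonneg fun t => (h t).dotProduct_mulVec_nonneg x

lemma posSemidef_smul {n : Type*} [Fintype n] {c : ℝ} (hc : 0 ≤ c) {M : Matrix n n ℝ}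
    (hM : M.PosSemidef) : (c • M).PosSemidef := by
  refine Matrix.PosSemidef.of_dotProduct_mulVec_nonneg ?_ ?_
  · show _ = _
    have h : Mᵀ = M := by rw [← Matrix.conjTranspose_eq_transpose_of_trivial]; exact hM.1.eq
    simp [h]
  · intro x
    rw [Matrix.smul_mulVec, dotProduct_smul, smul_eq_mul]
    exact mul_nonneg hc (hM.dotProduct_mulVec_nonneg x)

lemma psd_sandwich {n m : Type*} [Fintype n] [Fintype m] {A : Matrix n n ℝ} (hA : A.PosSemidef)
    (B : Matrix n m ℝ) : (Bᵀ * A * B).PosSemidef := by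
  have := hA.conjTranspose_mul_mul_same B
  rwa [Matrix.conjTranspose_eq_transpose_of_trivial] at this

lemma psd_sandwich' {n m : Type*} [Fintype n] [Fintype m] {A : Matrix n n ℝ} (hA : A.PosSemidef)
    (B : Matrix m n ℝ) : (B * A * Bᵀ).PosSemidef := by
  have := hA.mul_mul_conjTranspose_same B
  rwa [Matrix.conjTranspose_eq_transpose_of_trivial] at this

lemma psd_transpose_eq {n : Type*} [Fintype n] {M : Matrix n n ℝ} (hM : M.PosSemidef) :
    Mᵀ = M := by
  rw [← Matrix.conjTranspose_eq_transpose_of_trivial]; exact hM.1.eq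

lemma trace_psd_nonneg {n : Type*} [Fintype n] [DecidableEq n] {P S : Matrix n n ℝ}
    (hP : P.PosSemidef) (hS : S.PosSemidef) : 0 ≤ (P * S).trace := by
  obtain ⟨X, hXpsd, hsq⟩ : ∃ X : Matrix n n ℝ, X.PosSemidef ∧ X * X = P := by
    open scoped MatrixOrder in
    exact ⟨CFC.sqrt P, (CFC.sqrt_nonneg P).posSemidef, CFC.sqrt_mul_sqrt_self P hP.nonneg⟩
  have h1 : (P * S).trace = (X * S * X).trace := by
    calc (P * S).trace = (X * X * S).trace := by rw [hsq]
      _ = (X * (X * S)).trace := by rw [Matrix.mul_assoc]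
      _ = (X * S * X).trace := by rw [Matrix.trace_mul_comm]
  rw [h1]
  have hpsd : (X * S * X).PosSemidef := by
    have h2 : X * S * X = Xᵀ * S * X := by
      rw [← Matrix.conjTranspose_eq_transpose_of_trivial, hXpsd.1.eq]
    rw [h2]
    exact psd_sandwich hS _
  rw [Matrix.trace]
  refine Finset.sum_nonneg fun i _ => ?_
  have := hpsd.dotProduct_mulVec_nonneg (Pi.single i 1)
  simpa [Matrix.mulVec, dotProduct, Pi.single_apply] using this

lemma trace_mono {n : Type*} [Fintype n] [DecidableEq n] {P X Y : Matrix n n ℝ}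
    (hP : P.PosSemidef) (h : (Y - X).PosSemidef) : (P * X).trace ≤ (P * Y).trace := by
  have := trace_psd_nonneg hP h
  rw [Matrix.mul_sub, Matrix.trace_sub] at this
  linarith

lemma tsum_shift {dx : ℕ} {γ : ℝ} {C : Matrix (Fin dx) (Fin dx) ℝ}
    (X : Matrix (Fin dx) (Fin dx) ℝ)
    (hs : Summable (fun t : ℕ => γ ^ t • (Cᵀ ^ t * X * C ^ t))) :
    (∑' t : ℕ, γ ^ t • (Cᵀ ^ t * X * C ^ t))
      = X + γ • (Cᵀ * (∑' t : ℕ, γ ^ t • (Cᵀ ^ t * X * C ^ t)) * C) := by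
  set f : ℕ → Matrix (Fin dx) (Fin dx) ℝ := fun t => γ ^ t • (Cᵀ ^ t * X * C ^ t) with hf
  have h0 : f 0 = X := by simp [hf]
  have hstep : ∀ t, f (t + 1) = (γ • sandwichLM Cᵀ C) (f t) := by
    intro t
    simp only [hf, sandwichLM, LinearMap.smul_apply, LinearMap.coe_mk, AddHom.coe_mk]
    rw [pow_succ γ, pow_succ' Cᵀ, pow_succ C]
    simp only [Matrix.mul_smul, Matrix.smul_mul, smul_smul, Matrix.mul_assoc]
    ring_nf
  have : (∑' t : ℕ, f t) = X + ∑' t : ℕ, f (t + 1) := by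
    conv_lhs => rw [hs.tsum_eq_zero_add]
    rw [h0]
  nth_rewrite 1 [this]
  congr 1
  calc (∑' t : ℕ, f (t + 1)) = ∑' t : ℕ, (γ • sandwichLM Cᵀ C) (f t) := tsum_congr hstep
    _ = (γ • sandwichLM Cᵀ C) (∑' t, f t) := (map_tsum' _ hs).symm
    _ = γ • (Cᵀ * (∑' t, f t) * C) := rfl

lemma lyap_unique {dx : ℕ} {γ : ℝ} (hγ : γ ∈ Set.Ioo (0:ℝ) 1) {C : Matrix (Fin dx) (Fin dx) ℝ}
    (hC : ∃ c > (0:ℝ), ∃ ρ ∈ Set.Ioo (0:ℝ) 1, ∀ t : ℕ, γ ^ t * ‖C ^ t‖ ^ 2 ≤ c * ρ ^ t)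
    {Δ X Y : Matrix (Fin dx) (Fin dx) ℝ}
    (hX : X = Δ + γ • (Cᵀ * X * C)) (hY : Y = Δ + γ • (Cᵀ * Y * C)) : X = Y := by
  set Z := X - Y with hZdef
  have hZ : Z = γ • (Cᵀ * Z * C) := by
    rw [hZdef]
    nth_rewrite 1 [hX, hY]
    simp only [Matrix.mul_sub, Matrix.sub_mul, smul_sub]
    abel
  have hit : ∀ t : ℕ, Z = γ ^ t • (Cᵀ ^ t * Z * C ^ t) := by
    intro t
    induction t with
    | zero => simp
    | succ u ih =>
      calc Z = γ • (Cᵀ * Z * C) := hZ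
        _ = γ • (Cᵀ * (γ ^ u • (Cᵀ ^ u * Z * C ^ u)) * C) := by rw [← ih]
        _ = γ ^ (u + 1) • (Cᵀ ^ (u + 1) * Z * C ^ (u + 1)) := by
            rw [pow_succ γ, pow_succ' Cᵀ, pow_succ C]
            simp only [Matrix.mul_smul, Matrix.smul_mul, smul_smul, Matrix.mul_assoc]
            ring_nf
  obtain ⟨c, hc, ρ, hρ, hb⟩ := hC
  have hnorm : ∀ t : ℕ, ‖Z‖ ≤ c * ρ ^ t * ‖Z‖ := by
    intro t
    calc ‖Z‖ = ‖γ ^ t • (Cᵀ ^ t * Z * C ^ t)‖ := by rw [← hit t]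
      _ ≤ γ ^ t * (‖C ^ t‖ * ‖Z‖ * ‖C ^ t‖) := by
          rw [norm_smul, Real.norm_eq_abs, abs_of_nonneg (pow_nonneg hγ.1.le t)]
          refine mul_le_mul_of_nonneg_left ?_ (pow_nonneg hγ.1.le t)
          calc ‖Cᵀ ^ t * Z * C ^ t‖ ≤ ‖Cᵀ ^ t * Z‖ * ‖C ^ t‖ := norm_mul_le _ _
            _ ≤ ‖Cᵀ ^ t‖ * ‖Z‖ * ‖C ^ t‖ :=
                mul_le_mul_of_nonneg_right (norm_mul_le _ _) (norm_nonneg _)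
            _ = ‖C ^ t‖ * ‖Z‖ * ‖C ^ t‖ := by
                rw [← Matrix.transpose_pow, norm_transpose]
      _ = (γ ^ t * ‖C ^ t‖ ^ 2) * ‖Z‖ := by ring
      _ ≤ c * ρ ^ t * ‖Z‖ := mul_le_mul_of_nonneg_right (hb t) (norm_nonneg _)
  have hlim : Filter.Tendsto (fun t : ℕ => c * ρ ^ t * ‖Z‖) Filter.atTop (nhds 0) := by
    have := (tendsto_pow_atTop_nhds_zero_of_lt_one hρ.1.le hρ.2).const_mul c
    simpa using this.mul_const ‖Z‖
  have hle : ‖Z‖ ≤ 0 := ge_of_tendsto' hlim hnorm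
  have hz : Z = 0 := norm_eq_zero.mp (le_antisymm hle (norm_nonneg Z))
  exact sub_eq_zero.mp (hZdef ▸ hz)

lemma delta_alg {dx du : ℕ} (A : Matrix (Fin dx) (Fin dx) ℝ) (B : Matrix (Fin dx) (Fin du) ℝ)
    (Q : Matrix (Fin dx) (Fin dx) ℝ) (R : Matrix (Fin du) (Fin du) ℝ)
    (N : Matrix (Fin dx) (Fin dx) ℝ)
    (θ θs : Matrix (Fin du) (Fin dx) ℝ)
    (hR : Rᵀ = R) (hN : Nᵀ = N) :
    (Q + θsᵀ * R * θs) + (A - B * θs)ᵀ * N * (A - B * θs)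
      - ((Q + θᵀ * R * θ) + (A - B * θ)ᵀ * N * (A - B * θ))
    = (θs - θ)ᵀ * (R + Bᵀ * N * B) * (θs - θ)
      + (θs - θ)ᵀ * ((R + Bᵀ * N * B) * θ - Bᵀ * N * A)
      + ((R + Bᵀ * N * B) * θ - Bᵀ * N * A)ᵀ * (θs - θ) := by
  simp only [Matrix.transpose_sub, Matrix.transpose_add, Matrix.transpose_mul,
    Matrix.transpose_transpose, hR, hN, Matrix.sub_mul, Matrix.mul_sub, Matrix.add_mul,
    Matrix.mul_add, Matrix.mul_assoc]
  abel

lemma complete_sq {dx du : ℕ} (G : Matrix (Fin du) (Fin du) ℝ) (hdet : IsUnit G.det)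
    (hGt : Gᵀ = G) (E D : Matrix (Fin du) (Fin dx) ℝ) :
    Dᵀ * G * D + Dᵀ * E + Eᵀ * D
      = (D + G⁻¹ * E)ᵀ * G * (D + G⁻¹ * E) - Eᵀ * G⁻¹ * E := by
  have hGinvt : (G⁻¹)ᵀ = G⁻¹ := by rw [Matrix.transpose_nonsing_inv, hGt]
  have h1 : ∀ X : Matrix (Fin du) (Fin dx) ℝ, G * (G⁻¹ * X) = X := by
    intro X; rw [← Matrix.mul_assoc, Matrix.mul_nonsing_inv _ hdet, Matrix.one_mul]
  have h2 : ∀ X : Matrix (Fin du) (Fin dx) ℝ, G⁻¹ * (G * X) = X := by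
    intro X; rw [← Matrix.mul_assoc, Matrix.nonsing_inv_mul _ hdet, Matrix.one_mul]
  simp only [Matrix.transpose_add, Matrix.transpose_mul, Matrix.transpose_transpose, hGinvt,
    hGt, Matrix.add_mul, Matrix.mul_add, Matrix.mul_assoc, h1, h2]
  abel

lemma sigmin_bddBelow {m : Type*} [Fintype m] [DecidableEq m] (A : Matrix m m ℝ) :
    BddBelow (Set.range fun x : {x : EuclideanSpace ℝ m // ‖x‖ = 1} =>
      ‖Matrix.toEuclideanLin A x.1‖) :=
  ⟨0, by rintro _ ⟨y, rfl⟩; exact norm_nonneg _⟩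

lemma sigmin_quad {m : Type*} [Fintype m] [DecidableEq m] {R : Matrix m m ℝ} (hR : R.PosDef)
    (x : m → ℝ) : sigmaMin R * (x ⬝ᵥ x) ≤ x ⬝ᵥ (R *ᵥ x) := by
  classical
  have hherm : R.IsHermitian := hR.1
  set b := hherm.eigenvectorBasis with hb
  set lam := hherm.eigenvalues with hlamdef
  have hσ_le : ∀ i, sigmaMin R ≤ lam i := by
    intro i
    have hb1 : ‖(b i : EuclideanSpace ℝ m)‖ = 1 := b.orthonormal.1 i
    have hval : ‖Matrix.toEuclideanLin R (b i)‖ = lam i := by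
      have hmv := hherm.mulVec_eigenvectorBasis i
      rw [Matrix.toEuclideanLin_apply]
      have h' : R *ᵥ (b i).ofLp = lam i • (b i).ofLp :=
        hmv
      rw [h']
      have h'' : (WithLp.toLp 2 (lam i • (b i).ofLp))
          = lam i • (b i : EuclideanSpace ℝ m) := by
        simp
      rw [h'', norm_smul, Real.norm_eq_abs, hb1, mul_one,
        abs_of_pos (hR.eigenvalues_pos i)]
    calc sigmaMin R ≤ ‖Matrix.toEuclideanLin R (⟨b i, hb1⟩ :
          {x : EuclideanSpace ℝ m // ‖x‖ = 1}).1‖ := ciInf_le (sigmin_bddBelow R) _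
      _ = lam i := hval
  set v : EuclideanSpace ℝ m := (WithLp.equiv 2 (m → ℝ)).symm x with hv
  have hRt : Rᵀ = R := by
    rw [← Matrix.conjTranspose_eq_transpose_of_trivial]; exact hherm.eq
  have hinner : ∀ (y z : EuclideanSpace ℝ m),
      (inner ℝ y z : ℝ) = (WithLp.equiv 2 (m → ℝ)) y ⬝ᵥ (WithLp.equiv 2 (m → ℝ)) z := by
    intro y z; rw [EuclideanSpace.inner_eq_star_dotProduct, star_trivial, dotProduct_comm]; rfl
  have h1 : x ⬝ᵥ (R *ᵥ x) = ∑ i, (inner ℝ v (b i) : ℝ) * (lam i * (inner ℝ (b i) v : ℝ)) := by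
    have hR' : ∀ i, (inner ℝ (b i) ((WithLp.equiv 2 (m → ℝ)).symm (R *ᵥ x)) : ℝ)
        = lam i * (inner ℝ (b i) v : ℝ) := by
      intro i
      rw [hinner, hinner]
      simp only [Equiv.apply_symm_apply]
      rw [Matrix.dotProduct_mulVec, ← Matrix.mulVec_transpose, hRt]
      have := hherm.mulVec_eigenvectorBasis i
      erw [this]
      simp [smul_dotProduct, hv]
      rfl
    have hps := b.sum_inner_mul_inner v ((WithLp.equiv 2 (m → ℝ)).symm (R *ᵥ x))
    have hx : (inner ℝ v ((WithLp.equiv 2 (m → ℝ)).symm (R *ᵥ x)) : ℝ) = x ⬝ᵥ (R *ᵥ x) := by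
      rw [hinner]; simp [hv]
    rw [← hx, ← hps]
    exact Finset.sum_congr rfl fun i _ => by rw [hR' i]
  have h2 : x ⬝ᵥ x = ∑ i, (inner ℝ v (b i) : ℝ) * (inner ℝ (b i) v : ℝ) := by
    have hps := b.sum_inner_mul_inner v v
    have hx : (inner ℝ v v : ℝ) = x ⬝ᵥ x := by rw [hinner]; simp [hv]
    rw [← hx, ← hps]
  rw [h1, h2, Finset.mul_sum]
  refine Finset.sum_le_sum fun i _ => ?_
  have hsym : (inner ℝ (b i) v : ℝ) = (inner ℝ v (b i) : ℝ) := real_inner_comm _ _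
  rw [hsym]
  have hsq : (0:ℝ) ≤ (inner ℝ v (b i) : ℝ) * (inner ℝ v (b i) : ℝ) := mul_self_nonneg _
  calc sigmaMin R * ((inner ℝ v (b i) : ℝ) * (inner ℝ v (b i) : ℝ))
      ≤ lam i * ((inner ℝ v (b i) : ℝ) * (inner ℝ v (b i) : ℝ)) :=
        mul_le_mul_of_nonneg_right (hσ_le i) hsq
    _ = (inner ℝ v (b i) : ℝ) * (lam i * (inner ℝ v (b i) : ℝ)) := by ring

lemma sigmin_pos {m : Type*} [Fintype m] [DecidableEq m] [Nonempty m] {R : Matrix m m ℝ}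
    (hR : R.PosDef) : 0 < sigmaMin R := by
  classical
  have hdet : IsUnit R.det := hR.det_pos.ne'.isUnit
  have hRinv0 : R⁻¹ ≠ 0 := by
    intro h
    have h1 : R⁻¹ * R = 1 := Matrix.nonsing_inv_mul R hdet
    rw [h, zero_mul] at h1
    obtain ⟨i⟩ := (inferInstance : Nonempty m)
    have := congr_fun (congr_fun h1 i) i
    simp [Matrix.one_apply] at this
  have hnormpos : 0 < ‖R⁻¹‖ := norm_pos_iff.mpr hRinv0
  have : Nonempty {x : EuclideanSpace ℝ m // ‖x‖ = 1} := by
    obtain ⟨i⟩ := (inferInstance : Nonempty m)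
    exact ⟨⟨EuclideanSpace.single i 1, by simp⟩⟩
  refine lt_of_lt_of_le (by positivity : (0:ℝ) < ‖R⁻¹‖⁻¹) (le_ciInf fun z => ?_)
  obtain ⟨y, hy⟩ := z
  have hcomp : Matrix.toEuclideanLin R⁻¹ (Matrix.toEuclideanLin R y) = y := by
    rw [Matrix.toEuclideanLin_apply, Matrix.toEuclideanLin_apply]
    simp [Matrix.mulVec_mulVec, Matrix.nonsing_inv_mul R hdet]
  have hle : ‖Matrix.toEuclideanLin R⁻¹ (Matrix.toEuclideanLin R y)‖
      ≤ ‖R⁻¹‖ * ‖Matrix.toEuclideanLin R y‖ :=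
    Matrix.l2_opNorm_mulVec R⁻¹ (Matrix.toEuclideanLin R y)
  rw [hcomp, hy] at hle
  have hinv : ‖R⁻¹‖⁻¹ * ‖R⁻¹‖ = 1 := inv_mul_cancel₀ hnormpos.ne'
  nlinarith [norm_nonneg (Matrix.toEuclideanLin R y), inv_nonneg.mpr hnormpos.le]

lemma opnorm_psd {m : Type*} [Fintype m] [DecidableEq m] {S : Matrix m m ℝ}
    (hS : S.PosSemidef) : (‖S‖ • (1 : Matrix m m ℝ) - S).PosSemidef := by
  refine Matrix.PosSemidef.of_dotProduct_mulVec_nonneg ?_ ?_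
  · show _ = _
    have h : Sᵀ = S := by rw [← Matrix.conjTranspose_eq_transpose_of_trivial]; exact hS.1.eq
    simp [Matrix.conjTranspose_smul, Matrix.conjTranspose_eq_transpose_of_trivial,
      Matrix.transpose_sub, h]
  · intro x
    have hx : star x = x := by simp
    rw [hx, Matrix.sub_mulVec, dotProduct_sub, Matrix.smul_mulVec, Matrix.one_mulVec,
      dotProduct_smul, smul_eq_mul, sub_nonneg]
    set v : EuclideanSpace ℝ m := (WithLp.equiv 2 (m → ℝ)).symm x with hv
    have h1 : x ⬝ᵥ (S *ᵥ x) = (inner ℝ v (Matrix.toEuclideanLin S v) : ℝ) := by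
      rw [EuclideanSpace.inner_eq_star_dotProduct]
      simp [hv]
      exact dotProduct_comm _ _
    have h2 : x ⬝ᵥ x = (inner ℝ v v : ℝ) := by
      rw [EuclideanSpace.inner_eq_star_dotProduct]; simp [hv]
    rw [h1, h2]
    calc (inner ℝ v (Matrix.toEuclideanLin S v) : ℝ)
        ≤ ‖v‖ * ‖Matrix.toEuclideanLin S v‖ := real_inner_le_norm _ _
      _ ≤ ‖v‖ * (‖S‖ * ‖v‖) := by
          refine mul_le_mul_of_nonneg_left ?_ (norm_nonneg _)
          exact Matrix.l2_opNorm_mulVec S v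
      _ = ‖S‖ * (‖v‖ * ‖v‖) := by ring
      _ = ‖S‖ * (inner ℝ v v : ℝ) := by rw [real_inner_self_eq_norm_mul_norm]

lemma inv_loewner {m : Type*} [Fintype m] [DecidableEq m] {G : Matrix m m ℝ} (hG : G.PosDef)
    (hGt : Gᵀ = G) {σ : ℝ} (hσ : 0 < σ)
    (h : ∀ x : m → ℝ, σ * (x ⬝ᵥ x) ≤ x ⬝ᵥ (G *ᵥ x)) :
    (σ⁻¹ • (1 : Matrix m m ℝ) - G⁻¹).PosSemidef := by
  have hdet : IsUnit G.det := hG.det_pos.ne'.isUnit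
  have hGinvt : (G⁻¹)ᵀ = G⁻¹ := by rw [Matrix.transpose_nonsing_inv, hGt]
  refine Matrix.PosSemidef.of_dotProduct_mulVec_nonneg ?_ ?_
  · show _ = _
    simp [Matrix.conjTranspose_smul, Matrix.conjTranspose_eq_transpose_of_trivial,
      Matrix.transpose_sub, hGinvt]
  · intro x
    have hx : star x = x := by simp
    rw [hx, Matrix.sub_mulVec, dotProduct_sub, Matrix.smul_mulVec, Matrix.one_mulVec,
      dotProduct_smul, smul_eq_mul, sub_nonneg]
    set y : m → ℝ := G⁻¹ *ᵥ x with hy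
    have hxy : x = G *ᵥ y := by
      rw [hy, Matrix.mulVec_mulVec, Matrix.mul_nonsing_inv _ hdet, Matrix.one_mulVec]
    have h1 : x ⬝ᵥ (G⁻¹ *ᵥ x) = y ⬝ᵥ (G *ᵥ y) := by
      conv_lhs => rw [← hy, hxy]
      rw [dotProduct_comm, ← hxy]
    rw [h1]
    set a : ℝ := y ⬝ᵥ y with ha
    set bq : ℝ := x ⬝ᵥ x with hbq
    set c : ℝ := y ⬝ᵥ (G *ᵥ y) with hc
    have hyx : y ⬝ᵥ x = c := by rw [hc]; conv_lhs => rw [hxy]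
    have hσa : σ * a ≤ c := h y
    have ha0 : 0 ≤ a := by
      rw [ha]
      have hcs := real_inner_self_nonneg (x := (WithLp.equiv 2 (m → ℝ)).symm y)
      rwa [WithLp.equiv_symm_apply, EuclideanSpace.inner_toLp_toLp, star_trivial] at hcs
    have hbq0 : 0 ≤ bq := by
      rw [hbq]
      have hcs := real_inner_self_nonneg (x := (WithLp.equiv 2 (m → ℝ)).symm x)
      rwa [WithLp.equiv_symm_apply, EuclideanSpace.inner_toLp_toLp, star_trivial] at hcs
    have hc0 : 0 ≤ c := le_trans (by positivity) hσa
    have hCS : c * c ≤ a * bq := by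
      have := real_inner_mul_inner_self_le
        ((WithLp.equiv 2 (m → ℝ)).symm y) ((WithLp.equiv 2 (m → ℝ)).symm x)
      simp only [WithLp.equiv_symm_apply, EuclideanSpace.inner_toLp_toLp, star_trivial] at this
      rw [ha, hbq, ← hyx, dotProduct_comm y x]
      exact this
    have hkey : σ * c ≤ bq := by
      rcases eq_or_lt_of_le hc0 with hc' | hc'
      · rw [← hc']; simpa using hbq0
      · have h2 : σ * (c * c) ≤ σ * (a * bq) := by nlinarith
        have h3 : σ * a * bq ≤ c * bq := mul_le_mul_of_nonneg_right hσa hbq0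
        have h4 : σ * (c * c) ≤ c * bq := by nlinarith
        exact (mul_le_mul_iff_right₀ hc').mp (by nlinarith : c * (σ * c) ≤ c * bq)
    calc c = σ⁻¹ * (σ * c) := by field_simp
      _ ≤ σ⁻¹ * bq := mul_le_mul_of_nonneg_left hkey (inv_nonneg.mpr hσ.le)

end GradDomAux

open GradDomAux

/-- Lyapunov equation for `Mmat`. -/
lemma Mmat_lyap {dx du : ℕ} {γ : ℝ} (hγ : γ ∈ Set.Ioo (0:ℝ) 1)
    (A : Matrix (Fin dx) (Fin dx) ℝ) (B : Matrix (Fin dx) (Fin du) ℝ)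
    (Q : Matrix (Fin dx) (Fin dx) ℝ) (R : Matrix (Fin du) (Fin du) ℝ)
    (θ : Matrix (Fin du) (Fin dx) ℝ) (hθ : IsStable γ (Cl A B θ)) :
    Mmat γ A B Q R θ = (Q + θᵀ * R * θ)
      + γ • ((Cl A B θ)ᵀ * Mmat γ A B Q R θ * Cl A B θ) := by
  unfold Mmat
  exact tsum_shift _ (summableM hγ hθ _)

lemma Mmat_psd {dx du : ℕ} {γ : ℝ} (hγ : γ ∈ Set.Ioo (0:ℝ) 1)
    (A : Matrix (Fin dx) (Fin dx) ℝ) (B : Matrix (Fin dx) (Fin du) ℝ)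
    {Q : Matrix (Fin dx) (Fin dx) ℝ} {R : Matrix (Fin du) (Fin du) ℝ}
    (hQpsd : Q.PosSemidef) (hRpsd : R.PosSemidef)
    (θ : Matrix (Fin du) (Fin dx) ℝ) (hθ : IsStable γ (Cl A B θ)) :
    (Mmat γ A B Q R θ).PosSemidef := by
  unfold Mmat
  refine posSemidef_tsum (summableM hγ hθ _) (fun t => ?_)
  refine posSemidef_smul (pow_nonneg hγ.1.le t) ?_
  rw [← Matrix.transpose_pow]
  exact psd_sandwich (hQpsd.add (psd_sandwich hRpsd θ)) _

lemma SigMat_psd {dx du : ℕ} {γ : ℝ} (hγ : γ ∈ Set.Ioo (0:ℝ) 1)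
    (A : Matrix (Fin dx) (Fin dx) ℝ) (B : Matrix (Fin dx) (Fin du) ℝ)
    {S1 : Matrix (Fin dx) (Fin dx) ℝ} (hS1 : S1.PosSemidef)
    (θ : Matrix (Fin du) (Fin dx) ℝ) (hθ : IsStable γ (Cl A B θ)) :
    (SigMat γ A B S1 θ).PosSemidef := by
  unfold SigMat
  refine posSemidef_smul (by linarith [hγ.2] : (0:ℝ) ≤ 1 - γ) ?_
  refine posSemidef_tsum (summableS hγ hθ _) (fun t => ?_)
  refine posSemidef_smul (pow_nonneg hγ.1.le t) ?_
  rw [← Matrix.transpose_pow]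
  exact psd_sandwich' hS1 _

/-- Gradient domination core inequality: with `Q` positive semidefinite,
`R` positive definite and `Σ₁` positive semidefinite, for stable gains `θ, θ*`, the matrix
`G = R + γ Bᵀ M(θ) B` is positive definite and
`J(θ) − J(θ*) ≤ tr(Σ_{θ*} E_θᵀ G⁻¹ E_θ) ≤ (‖Σ_{θ*}‖ / σ_min(R)) tr(E_θᵀ E_θ)`. -/
theorem gradient_domination_core
    {dx du : ℕ} (γ : ℝ) (hγ : γ ∈ Set.Ioo (0:ℝ) 1)
    (A : Matrix (Fin dx) (Fin dx) ℝ) (B : Matrix (Fin dx) (Fin du) ℝ)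
    (Q : Matrix (Fin dx) (Fin dx) ℝ) (R : Matrix (Fin du) (Fin du) ℝ)
    (S1 : Matrix (Fin dx) (Fin dx) ℝ)
    (hQ : Qᵀ = Q) (hR : Rᵀ = R)
    (hQpsd : Q.PosSemidef) (hRpd : R.PosDef) (hS1 : S1.PosSemidef)
    (θ θs : Matrix (Fin du) (Fin dx) ℝ)
    (hθ : IsStable γ (Cl A B θ)) (hθs : IsStable γ (Cl A B θs)) :
    (R + γ • (Bᵀ * Mmat γ A B Q R θ * B)).PosDef
    ∧ Jcost γ A B Q R S1 θ - Jcost γ A B Q R S1 θs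
        ≤ (SigMat γ A B S1 θs * (Emat γ A B Q R θ)ᵀ *
            (R + γ • (Bᵀ * Mmat γ A B Q R θ * B))⁻¹ * Emat γ A B Q R θ).trace
    ∧ (SigMat γ A B S1 θs * (Emat γ A B Q R θ)ᵀ *
          (R + γ • (Bᵀ * Mmat γ A B Q R θ * B))⁻¹ * Emat γ A B Q R θ).trace
        ≤ ‖SigMat γ A B S1 θs‖ / sigmaMin R *
            ((Emat γ A B Q R θ)ᵀ * Emat γ A B Q R θ).trace := by
  have hγ0 := hγ.1
  have hγ1 := hγ.2
  set C : Matrix (Fin dx) (Fin dx) ℝ := Cl A B θ with hCdef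
  set Cs : Matrix (Fin dx) (Fin dx) ℝ := Cl A B θs with hCsdef
  set M : Matrix (Fin dx) (Fin dx) ℝ := Mmat γ A B Q R θ with hMdef
  set Ms : Matrix (Fin dx) (Fin dx) ℝ := Mmat γ A B Q R θs with hMsdef
  set Sg : Matrix (Fin dx) (Fin dx) ℝ := SigMat γ A B S1 θs with hSgdef
  set E : Matrix (Fin du) (Fin dx) ℝ := Emat γ A B Q R θ with hEdef
  set G : Matrix (Fin du) (Fin du) ℝ := R + γ • (Bᵀ * M * B) with hGdef
  set N : Matrix (Fin dx) (Fin dx) ℝ := γ • M with hNdef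
  have hMpsd : M.PosSemidef := by
    rw [hMdef]; exact Mmat_psd hγ A B hQpsd hRpd.posSemidef θ hθ
  have hMherm : Mᵀ = M := psd_transpose_eq hMpsd
  have hSgpsd : Sg.PosSemidef := by
    rw [hSgdef]; exact SigMat_psd hγ A B hS1 θs hθs
  have hGpd : G.PosDef := by
    rw [hGdef]
    exact hRpd.add_posSemidef (posSemidef_smul hγ0.le (psd_sandwich hMpsd B))
  have hGt : Gᵀ = G := by
    rw [hGdef]
    have h1 : (Bᵀ * M * B)ᵀ = Bᵀ * M * B := by
      simp [Matrix.transpose_mul, Matrix.transpose_transpose, hMherm, Matrix.mul_assoc]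
    simp [Matrix.transpose_add, Matrix.transpose_smul, h1, hR]
  have hNt : Nᵀ = N := by
    rw [hNdef]; simp [Matrix.transpose_smul, hMherm]
  have hNpsd : N.PosSemidef := by
    rw [hNdef]; exact posSemidef_smul hγ0.le hMpsd
  have hGN : G = R + Bᵀ * N * B := by
    rw [hGdef, hNdef]
    congr 1
    simp [Matrix.mul_smul, Matrix.smul_mul]
  have hEN : E = (R + Bᵀ * N * B) * θ - Bᵀ * N * A := by
    rw [hEdef, hNdef]
    unfold Emat
    rw [← hMdef]
    simp [Matrix.mul_smul, Matrix.smul_mul]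
  have hMlyapγ : M = (Q + θᵀ * R * θ) + γ • (Cᵀ * M * C) := by
    rw [hMdef, hCdef]; exact Mmat_lyap hγ A B Q R θ hθ
  have hMslyapγ : Ms = (Q + θsᵀ * R * θs) + γ • (Csᵀ * Ms * Cs) := by
    rw [hMsdef, hCsdef]; exact Mmat_lyap hγ A B Q R θs hθs
  have hMlyapN : M = (Q + θᵀ * R * θ) + Cᵀ * N * C := by
    rw [hNdef]
    nth_rewrite 1 [hMlyapγ]
    congr 1
    simp [Matrix.mul_smul, Matrix.smul_mul]
  set Δ : Matrix (Fin dx) (Fin dx) ℝ := (Q + θsᵀ * R * θs) + Csᵀ * N * Cs - M with hΔdef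
  have hΔγ : Csᵀ * N * Cs = γ • (Csᵀ * M * Cs) := by
    rw [hNdef]; simp [Matrix.mul_smul, Matrix.smul_mul]
  have hdiff : Ms - M = ∑' t : ℕ, γ ^ t • (Csᵀ ^ t * Δ * Cs ^ t) := by
    refine lyap_unique (Δ := Δ) hγ (geom_bound hγ hθs) ?_ ?_
    · rw [hΔdef, hΔγ]
      nth_rewrite 1 [hMslyapγ]
      simp only [Matrix.mul_sub, Matrix.sub_mul, smul_sub]
      abel
    · exact tsum_shift Δ (summableM hγ hθs Δ)
  -- J difference
  have hterm : ∀ t : ℕ, ((γ ^ t • (Csᵀ ^ t * Δ * Cs ^ t)) * S1).trace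
      = (Δ * (γ ^ t • (Cs ^ t * S1 * Csᵀ ^ t))).trace := by
    intro t
    rw [Matrix.smul_mul, Matrix.mul_smul, Matrix.trace_smul, Matrix.trace_smul]
    congr 1
    simp only [Matrix.mul_assoc]
    rw [Matrix.trace_mul_comm]
    simp only [Matrix.mul_assoc]
  have hsum1 : ((Ms - M) * S1).trace = ∑' t : ℕ, ((γ ^ t • (Csᵀ ^ t * Δ * Cs ^ t)) * S1).trace := by
    rw [hdiff]
    have := map_tsum' (mulTraceLM S1) (summableM hγ hθs Δ)
    simpa [mulTraceLM] using this
  have hsum2 : (Δ * (∑' t : ℕ, γ ^ t • (Cs ^ t * S1 * Csᵀ ^ t))).trace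
      = ∑' t : ℕ, (Δ * (γ ^ t • (Cs ^ t * S1 * Csᵀ ^ t))).trace := by
    have := map_tsum' (traceMulLM Δ) (summableS hγ hθs S1)
    simpa [traceMulLM] using this
  have hSgeq : Sg = (1 - γ) • ∑' t : ℕ, γ ^ t • (Cs ^ t * S1 * Csᵀ ^ t) := by
    rw [hSgdef, hCsdef]; rfl
  have hkey : (Δ * Sg).trace = (1 - γ) * ((Ms - M) * S1).trace := by
    rw [hSgeq, Matrix.mul_smul, Matrix.trace_smul, smul_eq_mul, hsum2, hsum1]
    congr 1
    exact tsum_congr fun t => (hterm t).symm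
  have hJd : Jcost γ A B Q R S1 θ - Jcost γ A B Q R S1 θs = -((Δ * Sg).trace) := by
    rw [hkey]
    unfold Jcost
    rw [← hMdef, ← hMsdef, Matrix.sub_mul, Matrix.trace_sub]
    ring
  -- completing the square
  have hCeq : C = A - B * θ := by rw [hCdef]; rfl
  have hCseq : Cs = A - B * θs := by rw [hCsdef]; rfl
  set D : Matrix (Fin du) (Fin dx) ℝ := θs - θ with hDdef
  have hΔalg : Δ = Dᵀ * G * D + Dᵀ * E + Eᵀ * D := by
    rw [hΔdef, hGN, hEN, hDdef]
    nth_rewrite 1 [hMlyapN]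
    rw [hCeq, hCseq]
    exact delta_alg A B Q R N θ θs hR hNt
  have hΔsq : Δ = (D + G⁻¹ * E)ᵀ * G * (D + G⁻¹ * E) - Eᵀ * G⁻¹ * E := by
    rw [hΔalg]
    exact complete_sq G hGpd.det_pos.ne'.isUnit hGt E D
  refine ⟨hGpd, ?_, ?_⟩
  · -- part 2
    rw [hJd, hΔsq, Matrix.sub_mul, Matrix.trace_sub, neg_sub]
    have hpos : 0 ≤ (((D + G⁻¹ * E)ᵀ * G * (D + G⁻¹ * E)) * Sg).trace :=
      trace_psd_nonneg (psd_sandwich hGpd.posSemidef _) hSgpsd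
    have heq : (Eᵀ * G⁻¹ * E * Sg).trace = (Sg * Eᵀ * G⁻¹ * E).trace := by
      rw [Matrix.trace_mul_comm]
      simp [Matrix.mul_assoc]
    linarith
  · -- part 3
    rcases Nat.eq_zero_or_pos du with hdu | hdu
    · haveI hempty : IsEmpty (Fin du) := by rw [hdu]; infer_instance
      have h1 : Sg * Eᵀ * G⁻¹ * E = 0 := by
        ext i j; simp [Matrix.mul_apply]
      have h2 : Eᵀ * E = 0 := by
        ext i j; simp [Matrix.mul_apply]
      rw [h1, h2]
      simp
    · haveI : Nonempty (Fin du) := ⟨⟨0, hdu⟩⟩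
      have hσpos : 0 < sigmaMin R := sigmin_pos hRpd
      have hBNB : (Bᵀ * N * B).PosSemidef := psd_sandwich hNpsd B
      have hquadG : ∀ x : Fin du → ℝ, sigmaMin R * (x ⬝ᵥ x) ≤ x ⬝ᵥ (G *ᵥ x) := by
        intro x
        refine le_trans (sigmin_quad hRpd x) ?_
        rw [hGN, Matrix.add_mulVec, dotProduct_add]
        have hq := hBNB.dotProduct_mulVec_nonneg x
        rw [star_trivial] at hq
        linarith
      have hloe := inv_loewner hGpd hGt hσpos hquadG
      have hGinvpsd : G⁻¹.PosSemidef := hGpd.inv.posSemidef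
      have hEE : (Eᵀ * E).PosSemidef := by
        have := Matrix.posSemidef_conjTranspose_mul_self E
        rwa [Matrix.conjTranspose_eq_transpose_of_trivial] at this
      have hsand : Eᵀ * ((sigmaMin R)⁻¹ • (1 : Matrix (Fin du) (Fin du) ℝ) - G⁻¹) * E
          = (sigmaMin R)⁻¹ • (Eᵀ * E) - Eᵀ * G⁻¹ * E := by
        simp [Matrix.mul_sub, Matrix.sub_mul, Matrix.mul_smul, Matrix.smul_mul, Matrix.mul_one]
      have hmono1 : (Sg * (Eᵀ * G⁻¹ * E)).trace ≤ (Sg * ((sigmaMin R)⁻¹ • (Eᵀ * E))).trace := by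
        refine trace_mono hSgpsd ?_
        rw [← hsand]
        exact psd_sandwich hloe E
      have heq2 : (Sg * ((sigmaMin R)⁻¹ • (Eᵀ * E))).trace
          = (sigmaMin R)⁻¹ * (Sg * (Eᵀ * E)).trace := by
        rw [Matrix.mul_smul, Matrix.trace_smul, smul_eq_mul]
      have hmono2 : (Sg * (Eᵀ * E)).trace ≤ ‖Sg‖ * (Eᵀ * E).trace := by
        have h0 := trace_psd_nonneg (opnorm_psd hSgpsd) hEE
        rw [Matrix.sub_mul, Matrix.trace_sub, Matrix.smul_mul, Matrix.trace_smul, smul_eq_mul,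
          Matrix.one_mul] at h0
        linarith
      have hassoc : Sg * Eᵀ * G⁻¹ * E = Sg * (Eᵀ * G⁻¹ * E) := by
        simp [Matrix.mul_assoc]
      rw [hassoc]
      calc (Sg * (Eᵀ * G⁻¹ * E)).trace ≤ (Sg * ((sigmaMin R)⁻¹ • (Eᵀ * E))).trace := hmono1
        _ = (sigmaMin R)⁻¹ * (Sg * (Eᵀ * E)).trace := heq2
        _ ≤ (sigmaMin R)⁻¹ * (‖Sg‖ * (Eᵀ * E).trace) :=
            mul_le_mul_of_nonneg_left hmono2 (inv_nonneg.mpr hσpos.le)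
        _ = ‖Sg‖ / sigmaMin R * (Eᵀ * E).trace := by rw [div_eq_mul_inv]; ring
end
end

section
/- Policy-gradient formula (Lemma 1, single-block deterministic core): let θ be a stable gain, let U be a neighborhood of θ in ℝ^{d_u×d_x}, and let N : U → ℝ^{d_x×d_x} be a map that is differentiable at θ and satisfies N(θ′) = Q + θ′ᵀRθ′ + γ C_{θ′}ᵀ N(θ′) C_{θ′} for every θ′ ∈ U. Then the function θ′ ↦ (1−γ) tr( N(θ′) Σ₁ ) is differentiable at θ and its derivative in any direction H ∈ ℝ^{d_u×d_x} equals 2 tr( Hᵀ E_θ Σ_θ ); equivalently, its gradient is the matrix 2 E_θ Σ_θ. -/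
open Matrix
open scoped Matrix.Norms.L2Operator

noncomputable section

lemma norm_transpose' {a b : ℕ} (X : Matrix (Fin a) (Fin b) ℝ) : ‖Xᵀ‖ = ‖X‖ := by
  rw [← conjTranspose_eq_transpose_of_trivial, l2_opNorm_conjTranspose]

lemma gpow_key {γ : ℝ} (hγ : 0 < γ) (t : ℕ) :
    γ ^ t * (γ ^ (-(t:ℝ)/2) * γ ^ (-(t:ℝ)/2)) = 1 := by
  rw [← Real.rpow_add hγ, ← Real.rpow_natCast γ t, ← Real.rpow_add hγ]
  norm_num

lemma bound_conj {dx : ℕ} {γ c r : ℝ} (hγ : γ ∈ Set.Ioo (0:ℝ) 1)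
    (P Q : ℕ → Matrix (Fin dx) (Fin dx) ℝ)
    (hP : ∀ t, ‖P t‖ ≤ c * r ^ t * γ ^ (-(t:ℝ)/2))
    (hQ : ∀ t, ‖Q t‖ ≤ c * r ^ t * γ ^ (-(t:ℝ)/2))
    (W : Matrix (Fin dx) (Fin dx) ℝ) (t : ℕ) :
    ‖γ ^ t • (P t * W * Q t)‖ ≤ (c ^ 2 * ‖W‖) * (r ^ 2) ^ t := by
  set g := γ ^ (-(t:ℝ)/2) with hg
  have hgpos : 0 < g := Real.rpow_pos_of_pos hγ.1 _
  have h1 : ‖P t * W * Q t‖ ≤ ‖P t‖ * ‖W‖ * ‖Q t‖ := by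
    calc ‖P t * W * Q t‖ ≤ ‖P t * W‖ * ‖Q t‖ := l2_opNorm_mul _ _
      _ ≤ ‖P t‖ * ‖W‖ * ‖Q t‖ := by
        gcongr
        exact l2_opNorm_mul _ _
  have h2 : ‖P t‖ * ‖W‖ * ‖Q t‖ ≤ (c * r ^ t * g) * ‖W‖ * (c * r ^ t * g) := by
    have hc' : 0 ≤ c * r ^ t * g := le_trans (norm_nonneg (P t)) (hP t)
    gcongr
    · exact hP t
    · exact hQ t
  have key := gpow_key hγ.1 t
  calc ‖γ ^ t • (P t * W * Q t)‖ = γ ^ t * ‖P t * W * Q t‖ := by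
        rw [norm_smul, Real.norm_eq_abs, abs_of_pos (pow_pos hγ.1 t)]
    _ ≤ γ ^ t * ((c * r ^ t * g) * ‖W‖ * (c * r ^ t * g)) := by
        have := le_trans h1 h2
        exact mul_le_mul_of_nonneg_left this (le_of_lt (pow_pos hγ.1 t))
    _ = (c ^ 2 * ‖W‖) * (r ^ 2) ^ t * (γ ^ t * (g * g)) := by ring
    _ = (c ^ 2 * ‖W‖) * (r ^ 2) ^ t := by rw [key, mul_one]

lemma summable_conj {dx : ℕ} {γ c r : ℝ} (hγ : γ ∈ Set.Ioo (0:ℝ) 1) (hr : r ∈ Set.Ioo (0:ℝ) 1)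
    (P Q : ℕ → Matrix (Fin dx) (Fin dx) ℝ)
    (hP : ∀ t, ‖P t‖ ≤ c * r ^ t * γ ^ (-(t:ℝ)/2))
    (hQ : ∀ t, ‖Q t‖ ≤ c * r ^ t * γ ^ (-(t:ℝ)/2))
    (W : Matrix (Fin dx) (Fin dx) ℝ) :
    Summable (fun t => γ ^ t • (P t * W * Q t)) := by
  have hr2 : r ^ 2 < 1 := by nlinarith [hr.1, hr.2]
  have hr2' : 0 ≤ r ^ 2 := sq_nonneg r
  exact Summable.of_norm_bounded
    ((summable_geometric_of_lt_one hr2' hr2).mul_left (c ^ 2 * ‖W‖))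
    (bound_conj hγ P Q hP hQ W)

/-- transpose as CLM -/
def transCLM (a b : ℕ) : Matrix (Fin a) (Fin b) ℝ →L[ℝ] Matrix (Fin b) (Fin a) ℝ :=
  LinearMap.toContinuousLinearMap (Matrix.transposeLinearEquiv (Fin a) (Fin b) ℝ ℝ).toLinearMap

@[simp] lemma transCLM_apply {a b : ℕ} (X : Matrix (Fin a) (Fin b) ℝ) : transCLM a b X = Xᵀ := rfl

/-- trace-pairing CLM : X ↦ tr (X * S) -/
def trCLM (a : ℕ) (S : Matrix (Fin a) (Fin a) ℝ) : Matrix (Fin a) (Fin a) ℝ →L[ℝ] ℝ :=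
  LinearMap.toContinuousLinearMap
    ((Matrix.traceLinearMap (Fin a) ℝ ℝ).comp
      ((LinearMap.mulRight ℝ S) : Matrix (Fin a) (Fin a) ℝ →ₗ[ℝ] _))

@[simp] lemma trCLM_apply {a : ℕ} (S X : Matrix (Fin a) (Fin a) ℝ) :
    trCLM a S X = (X * S).trace := rfl

/-- trace-pairing CLM : X ↦ tr (W * X) -/
def trLCLM (a : ℕ) (W : Matrix (Fin a) (Fin a) ℝ) : Matrix (Fin a) (Fin a) ℝ →L[ℝ] ℝ :=
  LinearMap.toContinuousLinearMap
    ((Matrix.traceLinearMap (Fin a) ℝ ℝ).comp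
      ((LinearMap.mulLeft ℝ W) : Matrix (Fin a) (Fin a) ℝ →ₗ[ℝ] _))

@[simp] lemma trLCLM_apply {a : ℕ} (W X : Matrix (Fin a) (Fin a) ℝ) :
    trLCLM a W X = (W * X).trace := rfl

/-- conjugation  X ↦ P * X * Q  as CLM -/
def conjCLM {a : ℕ} (P Q : Matrix (Fin a) (Fin a) ℝ) :
    Matrix (Fin a) (Fin a) ℝ →L[ℝ] Matrix (Fin a) (Fin a) ℝ :=
  LinearMap.toContinuousLinearMap
    (((LinearMap.mulRight ℝ Q).comp (LinearMap.mulLeft ℝ P)))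

@[simp] lemma conjCLM_apply {a : ℕ} (P Q X : Matrix (Fin a) (Fin a) ℝ) :
    conjCLM P Q X = P * X * Q := rfl

lemma tsum_transpose {a : ℕ} (f : ℕ → Matrix (Fin a) (Fin a) ℝ) (hf : Summable f) :
    (∑' t, f t)ᵀ = ∑' t, (f t)ᵀ := by
  have := (transCLM a a).map_tsum hf
  simpa using this

section lyap
variable {dx : ℕ} {γ c r : ℝ} {C : Matrix (Fin dx) (Fin dx) ℝ}

lemma transpose_bound (hC : ∀ t : ℕ, ‖C ^ t‖ ≤ c * r ^ t * γ ^ (-(t:ℝ)/2)) :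
    ∀ t : ℕ, ‖Cᵀ ^ t‖ ≤ c * r ^ t * γ ^ (-(t:ℝ)/2) := fun t => by
  rw [← Matrix.transpose_pow, norm_transpose']; exact hC t

variable (hγ : γ ∈ Set.Ioo (0:ℝ) 1) (hr : r ∈ Set.Ioo (0:ℝ) 1)
  (hC : ∀ t : ℕ, ‖C ^ t‖ ≤ c * r ^ t * γ ^ (-(t:ℝ)/2))

include hγ hr hC

lemma summable_lySol (W : Matrix (Fin dx) (Fin dx) ℝ) :
    Summable (fun t => γ ^ t • (Cᵀ ^ t * W * C ^ t)) :=
  summable_conj hγ hr _ _ (transpose_bound hC) hC W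

lemma summable_sig (W : Matrix (Fin dx) (Fin dx) ℝ) :
    Summable (fun t => γ ^ t • (C ^ t * W * Cᵀ ^ t)) :=
  summable_conj hγ hr _ _ hC (transpose_bound hC) W

lemma lyap_fixed (W : Matrix (Fin dx) (Fin dx) ℝ) :
    (∑' t, γ ^ t • (Cᵀ ^ t * W * C ^ t))
      = W + γ • (Cᵀ * (∑' t, γ ^ t • (Cᵀ ^ t * W * C ^ t)) * C) := by
  have hsum := summable_lySol hγ hr hC W
  conv_lhs => rw [Summable.tsum_eq_zero_add hsum]
  congr 1
  · simp
  · have hmap := (γ • conjCLM Cᵀ C).map_tsum hsum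
    have : ∀ t : ℕ, γ ^ (t+1) • (Cᵀ ^ (t+1) * W * C ^ (t+1))
        = (γ • conjCLM Cᵀ C) (γ ^ t • (Cᵀ ^ t * W * C ^ t)) := by
      intro t
      simp only [ContinuousLinearMap.smul_apply, conjCLM_apply]
      rw [pow_succ γ, pow_succ' Cᵀ, pow_succ C]
      simp only [smul_smul, Matrix.smul_mul, Matrix.mul_smul]
      rw [mul_comm (γ ^ t) γ]
      congr 1
      noncomm_ring
    calc (∑' t, γ ^ (t+1) • (Cᵀ ^ (t+1) * W * C ^ (t+1)))
        = ∑' t, (γ • conjCLM Cᵀ C) (γ ^ t • (Cᵀ ^ t * W * C ^ t)) := by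
          exact tsum_congr this
      _ = (γ • conjCLM Cᵀ C) (∑' t, γ ^ t • (Cᵀ ^ t * W * C ^ t)) := hmap.symm
      _ = γ • (Cᵀ * (∑' t, γ ^ t • (Cᵀ ^ t * W * C ^ t)) * C) := by
          simp

lemma lyap_unique (W X : Matrix (Fin dx) (Fin dx) ℝ)
    (hX : X = W + γ • (Cᵀ * X * C)) :
    X = ∑' t, γ ^ t • (Cᵀ ^ t * W * C ^ t) := by
  have hfix := lyap_fixed hγ hr hC W
  set S := ∑' t, γ ^ t • (Cᵀ ^ t * W * C ^ t) with hS
  have hDeq : X - S = γ • (Cᵀ * (X - S) * C) := by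
    calc X - S = (W + γ • (Cᵀ * X * C)) - (W + γ • (Cᵀ * S * C)) := by
          rw [← hX, ← hfix]
      _ = γ • (Cᵀ * (X - S) * C) := by
          simp only [Matrix.mul_sub, Matrix.sub_mul, smul_sub]
          abel
  set D := X - S with hD
  rw [hD] at hDeq
  have hiter : ∀ n : ℕ, D = γ ^ n • (Cᵀ ^ n * D * C ^ n) := by
    intro n
    induction n with
    | zero => simp
    | succ n ih =>
      calc D = γ • (Cᵀ * D * C) := hDeq
        _ = γ • (Cᵀ * (γ ^ n • (Cᵀ ^ n * D * C ^ n)) * C) := by rw [← ih]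
        _ = γ ^ (n+1) • (Cᵀ ^ (n+1) * D * C ^ (n+1)) := by
            rw [pow_succ γ, pow_succ' Cᵀ, pow_succ C]
            simp only [smul_smul, Matrix.smul_mul, Matrix.mul_smul]
            rw [mul_comm γ (γ ^ n)]
            congr 1
            noncomm_ring
  have hbound : ∀ n : ℕ, ‖D‖ ≤ (c ^ 2 * ‖D‖) * (r ^ 2) ^ n := by
    intro n
    calc ‖D‖ = ‖γ ^ n • (Cᵀ ^ n * D * C ^ n)‖ := by rw [← hiter n]
      _ ≤ (c ^ 2 * ‖D‖) * (r ^ 2) ^ n :=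
          bound_conj hγ _ _ (transpose_bound hC) hC D n
  have hr2 : r ^ 2 < 1 := by nlinarith [hr.1, hr.2]
  have hr2' : 0 ≤ r ^ 2 := sq_nonneg r
  have htend : Filter.Tendsto (fun n : ℕ => (c ^ 2 * ‖D‖) * (r ^ 2) ^ n)
      Filter.atTop (nhds 0) := by
    have := tendsto_pow_atTop_nhds_zero_of_lt_one hr2' hr2
    simpa using this.const_mul (c ^ 2 * ‖D‖)
  have hD0 : ‖D‖ ≤ 0 :=
    le_of_tendsto_of_tendsto' tendsto_const_nhds htend hbound
  have : D = 0 := by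
    have := norm_nonneg D
    have h0 : ‖D‖ = 0 := le_antisymm hD0 this
    exact norm_eq_zero.mp h0
  have := sub_eq_zero.mp this
  exact this

lemma trace_formula (W S1 : Matrix (Fin dx) (Fin dx) ℝ) :
    (1 - γ) * ((∑' t, γ ^ t • (Cᵀ ^ t * W * C ^ t)) * S1).trace
      = (W * ((1 - γ) • ∑' t, γ ^ t • (C ^ t * S1 * Cᵀ ^ t))).trace := by
  have hsumL := summable_lySol hγ hr hC W
  have hsumR := summable_sig hγ hr hC S1
  have hL : ((∑' t, γ ^ t • (Cᵀ ^ t * W * C ^ t)) * S1).trace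
      = ∑' t, γ ^ t * ((Cᵀ ^ t * W * C ^ t) * S1).trace := by
    have := (trCLM dx S1).map_tsum hsumL
    simpa [Matrix.smul_mul, Matrix.trace_smul, smul_eq_mul] using this
  have hR : (W * (∑' t, γ ^ t • (C ^ t * S1 * Cᵀ ^ t))).trace
      = ∑' t, γ ^ t * (W * (C ^ t * S1 * Cᵀ ^ t)).trace := by
    have := (trLCLM dx W).map_tsum hsumR
    simpa [Matrix.mul_smul, Matrix.trace_smul, smul_eq_mul] using this
  have hterm : ∀ t : ℕ, ((Cᵀ ^ t * W * C ^ t) * S1).trace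
      = (W * (C ^ t * S1 * Cᵀ ^ t)).trace := by
    intro t
    simp only [Matrix.mul_assoc]
    rw [trace_mul_comm]
    simp only [Matrix.mul_assoc]
  rw [Matrix.mul_smul, Matrix.trace_smul, smul_eq_mul, hL, hR]
  congr 1
  exact tsum_congr fun t => by rw [hterm t]

end lyap

lemma isBBM_matmul (a b c : ℕ) :
    IsBoundedBilinearMap ℝ
      (fun p : Matrix (Fin a) (Fin b) ℝ × Matrix (Fin b) (Fin c) ℝ => p.1 * p.2) where
  add_left x₁ x₂ y := Matrix.add_mul x₁ x₂ y
  smul_left t x y := Matrix.smul_mul t x y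
  add_right x y₁ y₂ := Matrix.mul_add x y₁ y₂
  smul_right t x y := (Matrix.mul_smul x t y)
  bound := ⟨1, one_pos, fun x y => by simpa using Matrix.l2_opNorm_mul x y⟩

lemma hasFDerivAt_matmul {E : Type*} [NormedAddCommGroup E] [NormedSpace ℝ E]
    {a b c : ℕ} {f : E → Matrix (Fin a) (Fin b) ℝ} {g : E → Matrix (Fin b) (Fin c) ℝ}
    {f' : E →L[ℝ] Matrix (Fin a) (Fin b) ℝ} {g' : E →L[ℝ] Matrix (Fin b) (Fin c) ℝ} {x : E}
    (hf : HasFDerivAt f f' x) (hg : HasFDerivAt g g' x) :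
    HasFDerivAt (fun y => f y * g y)
      (((isBBM_matmul a b c).deriv (f x, g x)).comp (f'.prod g')) x :=
  by have := ((isBBM_matmul a b c).hasFDerivAt (f x, g x)).comp x (hf.prodMk hg); exact this

lemma matmul_deriv_apply {E : Type*} [NormedAddCommGroup E] [NormedSpace ℝ E]
    {a b c : ℕ} (X : Matrix (Fin a) (Fin b) ℝ) (Y : Matrix (Fin b) (Fin c) ℝ)
    (f' : E →L[ℝ] Matrix (Fin a) (Fin b) ℝ) (g' : E →L[ℝ] Matrix (Fin b) (Fin c) ℝ) (H : E) :
    (((isBBM_matmul a b c).deriv (X, Y)).comp (f'.prod g')) H = X * g' H + f' H * Y := by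
  simp [IsBoundedBilinearMap.deriv_apply]

lemma tr_sym_swap {a : ℕ} (S : Matrix (Fin a) (Fin a) ℝ) (hS : Sᵀ = S)
    (X : Matrix (Fin a) (Fin a) ℝ) : (Xᵀ * S).trace = (X * S).trace := by
  calc (Xᵀ * S).trace = ((Xᵀ * S)ᵀ).trace := (trace_transpose _).symm
    _ = (Sᵀ * X).trace := by rw [transpose_mul, transpose_transpose]
    _ = (X * S).trace := by rw [hS, trace_mul_comm]

lemma trace_W {du dx : ℕ} (γ : ℝ) (R : Matrix (Fin du) (Fin du) ℝ)
    (θ H : Matrix (Fin du) (Fin dx) ℝ) (B : Matrix (Fin dx) (Fin du) ℝ)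
    (M C S : Matrix (Fin dx) (Fin dx) ℝ)
    (hR : Rᵀ = R) (hM : Mᵀ = M) (hS : Sᵀ = S) :
    ((Hᵀ * R * θ + θᵀ * R * H - γ • ((B * H)ᵀ * M * C) - γ • (Cᵀ * M * (B * H))) * S).trace
      = 2 * (Hᵀ * ((R * θ - γ • (Bᵀ * M * C)) * S)).trace := by
  have e2 : θᵀ * R * H = (Hᵀ * R * θ)ᵀ := by
    simp [transpose_mul, hR, Matrix.mul_assoc]
  have e4 : Cᵀ * M * (B * H) = ((B * H)ᵀ * M * C)ᵀ := by
    simp [transpose_mul, hM, Matrix.mul_assoc]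
  simp only [Matrix.sub_mul, Matrix.add_mul, Matrix.smul_mul, trace_sub, trace_add, trace_smul,
    smul_eq_mul, e2, e4, tr_sym_swap S hS]
  have e3 : (B * H)ᵀ = Hᵀ * Bᵀ := by rw [transpose_mul]
  simp only [e3, Matrix.mul_sub, Matrix.sub_mul, Matrix.smul_mul, Matrix.mul_smul, trace_sub,
    trace_smul, smul_eq_mul, Matrix.mul_assoc]
  ring


lemma Emat_eq {dx du : ℕ} (γ : ℝ) (A : Matrix (Fin dx) (Fin dx) ℝ)
    (B : Matrix (Fin dx) (Fin du) ℝ) (Q : Matrix (Fin dx) (Fin dx) ℝ)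
    (R : Matrix (Fin du) (Fin du) ℝ) (θ : Matrix (Fin du) (Fin dx) ℝ) :
    Emat γ A B Q R θ = R * θ - γ • (Bᵀ * Mmat γ A B Q R θ * Cl A B θ) := by
  rw [Emat, Cl]
  simp only [Matrix.mul_sub, Matrix.sub_mul, Matrix.add_mul, Matrix.smul_mul, smul_sub,
    Matrix.mul_assoc]
  abel

set_option maxHeartbeats 2000000 in
/-- Policy-gradient formula (single-block deterministic core): if `θ` is
a stable gain, `U` a neighborhood of `θ`, and `N : U → ℝ^{d_x×d_x}` is differentiable at
`θ` and satisfies the Lyapunov equation `N(θ′) = Q + θ′ᵀRθ′ + γ C_{θ′}ᵀ N(θ′) C_{θ′}` on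
`U`, then `θ′ ↦ (1−γ) tr(N(θ′) Σ₁)` is differentiable at `θ` with derivative
`H ↦ 2 tr(Hᵀ E_θ Σ_θ)`; i.e. its gradient is the matrix `2 E_θ Σ_θ`. -/
theorem policy_gradient_formula
    {dx du : ℕ} (γ : ℝ) (hγ : γ ∈ Set.Ioo (0:ℝ) 1)
    (A : Matrix (Fin dx) (Fin dx) ℝ) (B : Matrix (Fin dx) (Fin du) ℝ)
    (Q : Matrix (Fin dx) (Fin dx) ℝ) (R : Matrix (Fin du) (Fin du) ℝ)
    (S1 : Matrix (Fin dx) (Fin dx) ℝ)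
    (hQ : Qᵀ = Q) (hR : Rᵀ = R) (hS1 : S1.PosSemidef)
    (θ : Matrix (Fin du) (Fin dx) ℝ) (hθ : IsStable γ (Cl A B θ))
    (U : Set (Matrix (Fin du) (Fin dx) ℝ)) (hU : U ∈ nhds θ)
    (N : Matrix (Fin du) (Fin dx) ℝ → Matrix (Fin dx) (Fin dx) ℝ)
    (hNdiff : DifferentiableAt ℝ N θ)
    (hN : ∀ θ' ∈ U, N θ' = Q + θ'ᵀ * R * θ' + γ • ((Cl A B θ')ᵀ * N θ' * Cl A B θ')) :
    DifferentiableAt ℝ (fun θ' => (1 - γ) * (N θ' * S1).trace) θ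
    ∧ ∃ L : Matrix (Fin du) (Fin dx) ℝ →L[ℝ] ℝ,
        HasFDerivAt (fun θ' => (1 - γ) * (N θ' * S1).trace) L θ ∧
        ∀ H : Matrix (Fin du) (Fin dx) ℝ,
          L H = 2 * (Hᵀ * (Emat γ A B Q R θ * SigMat γ A B S1 θ)).trace := by
  obtain ⟨c, hc, r, hr, hCb⟩ := hθ
  have hθU : θ ∈ U := mem_of_mem_nhds hU
  have hS1T : S1ᵀ = S1 := by
    rw [← conjTranspose_eq_transpose_of_trivial]; exact hS1.1
  obtain ⟨D, hD⟩ : ∃ D, HasFDerivAt N D θ := ⟨_, hNdiff.hasFDerivAt⟩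
  -- N θ is the Lyapunov solution, i.e. Mmat
  have hNθ : N θ = Mmat γ A B Q R θ := by
    have h := hN θ hθU
    have h2 := lyap_unique hγ hr hCb (Q + θᵀ * R * θ) (N θ) h
    rw [Mmat]; exact h2
  -- symmetry facts
  have hsumM := summable_lySol hγ hr hCb (Q + θᵀ * R * θ)
  have hsumS := summable_sig hγ hr hCb S1
  have hMs : (N θ)ᵀ = N θ := by
    rw [hNθ, Mmat, tsum_transpose _ hsumM]
    refine tsum_congr fun t => ?_
    simp [Matrix.transpose_smul, Matrix.transpose_mul, Matrix.transpose_add, hQ, hR,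
      Matrix.mul_assoc]
  have hSs : (SigMat γ A B S1 θ)ᵀ = SigMat γ A B S1 θ := by
    rw [SigMat, Matrix.transpose_smul, tsum_transpose _ hsumS]
    congr 1
    refine tsum_congr fun t => ?_
    simp [Matrix.transpose_smul, Matrix.transpose_mul, hS1T, Matrix.mul_assoc]
  -- derivative of the Lyapunov right-hand side
  have hid : HasFDerivAt (fun θ' : Matrix (Fin du) (Fin dx) ℝ => θ')
      (ContinuousLinearMap.id ℝ _) θ := hasFDerivAt_id θ
  have htr : HasFDerivAt (fun θ' : Matrix (Fin du) (Fin dx) ℝ => θ'ᵀ) (transCLM du dx) θ :=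
    (transCLM du dx).hasFDerivAt
  have h4 := hasFDerivAt_matmul (hasFDerivAt_const B θ) hid
  have h5 := (hasFDerivAt_const A θ).sub h4
  have h6 := ((transCLM dx dx).hasFDerivAt (x := A - B * θ)).comp θ h5
  have h7 := hasFDerivAt_matmul h6 hD
  have h8 := hasFDerivAt_matmul h7 h5
  have h9 := h8.const_smul γ
  have h3 := hasFDerivAt_matmul (hasFDerivAt_matmul htr (hasFDerivAt_const R θ)) hid
  have hG0 := ((hasFDerivAt_const Q θ).add h3).add h9
  have hNG := hG0.congr_of_eventuallyEq
    (Filter.eventuallyEq_of_mem hU (fun x hx => hN x hx))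
  have hDD' := hD.unique hNG
  have hkey : ∀ H, D H = (Hᵀ * R * θ + θᵀ * R * H - γ • ((B * H)ᵀ * N θ * Cl A B θ)
      - γ • ((Cl A B θ)ᵀ * N θ * (B * H)))
      + γ • ((Cl A B θ)ᵀ * D H * Cl A B θ) := by
    intro H
    conv_lhs => rw [hDD']
    simp only [Cl, ContinuousLinearMap.add_apply, ContinuousLinearMap.coe_comp',
      Function.comp_apply, ContinuousLinearMap.coe_id', id_eq, Pi.sub_apply,
      ContinuousLinearMap.smul_apply, ContinuousLinearMap.sub_apply,
      ContinuousLinearMap.zero_apply, ContinuousLinearMap.neg_apply, matmul_deriv_apply, transCLM_apply,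
      Matrix.zero_mul, Matrix.mul_zero, add_zero, zero_add, zero_sub,
      Matrix.transpose_sub, Matrix.transpose_neg, Matrix.neg_mul, Matrix.mul_neg,
      Matrix.add_mul, Matrix.mul_add, Matrix.smul_mul, Matrix.mul_smul,
      smul_add, smul_neg, smul_sub, Matrix.mul_assoc]
    abel
  have hDHt : ∀ H, D H = ∑' t, γ ^ t • ((Cl A B θ)ᵀ ^ t *
      (Hᵀ * R * θ + θᵀ * R * H - γ • ((B * H)ᵀ * N θ * Cl A B θ)
        - γ • ((Cl A B θ)ᵀ * N θ * (B * H))) * (Cl A B θ) ^ t) :=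
    fun H => lyap_unique hγ hr hCb _ _ (hkey H)
  -- the derivative of the cost
  set L : Matrix (Fin du) (Fin dx) ℝ →L[ℝ] ℝ := ((1 - γ) • trCLM dx S1).comp D with hL
  have hJ : HasFDerivAt (fun θ' => (1 - γ) * (N θ' * S1).trace) L θ := by
    have hfun : (fun θ' => (1 - γ) * (N θ' * S1).trace)
        = (fun X => ((1 - γ : ℝ) • trCLM dx S1) X) ∘ N := by
      funext θ'
      simp [smul_eq_mul]
    rw [hfun]
    exact (((1 - γ : ℝ) • trCLM dx S1).hasFDerivAt).comp θ hD
  refine ⟨hJ.differentiableAt, L, hJ, ?_⟩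
  intro H
  have hLH : L H = (1 - γ) * (D H * S1).trace := by
    simp [hL, smul_eq_mul]
  have hsig : SigMat γ A B S1 θ
      = (1 - γ) • ∑' t, γ ^ t • ((Cl A B θ) ^ t * S1 * (Cl A B θ)ᵀ ^ t) := rfl
  rw [hLH, hDHt H, trace_formula hγ hr hCb _ S1, ← hsig, Emat_eq γ A B Q R θ, ← hNθ]
  exact trace_W γ R θ H B (N θ) (Cl A B θ) (SigMat γ A B S1 θ) hR hMs hSs
end
end
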